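/- PROPOSITION (3/7 upper bound against the fractional optimum, edge arrival): consider the 6-vertex graph on vertices a,b,c,d,e,f whose edge set consists of the two triangles {ab, bc, ac} and {de, ef, df}, each of deterministic weight 1, together with the nine 'big' edges joining {a,b,c} to {d,e,f}, whose weights are independent random variables equal to 1/(4ε) with probability ε and 0 otherwise, for a parameter ε ∈ (0, 1/9]. The edges arrive online with the six weight-1 edges first (in any order) followed by the nine big edges (in any order). Then: (i) every online matching algorithm for this instance has expected total matched weight at most 9/4; and (ii) the expected value of the optimal fractional matching satisfies E[w(f-OPT(w))] ≥ 21/4 − 36ε. Consequently, for every δ > 0 there is ε > 0 such that no online algorithm achieves expected value more than (3/7 + δ)·E[w(f-OPT(w))]. -/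

import Mathlib

open Finset

/-- Expectation of `f` under the (finitely supported) mass function `mass`. -/
noncomputable def expOf {Ω : Type*} [Fintype Ω] (mass : Ω → ℝ) (f : Ω → ℝ) : ℝ :=
  ∑ ω, mass ω * f ω

/-- The edges of the 6-vertex instance: vertices `a,…,f` are `0,…,5`; edges `0,…,5` are
the two triangles `{ab, bc, ac}` and `{de, ef, df}`, and edges `6,…,14` are the nine
"big" edges joining `{a,b,c}` to `{d,e,f}`. -/
def ends8 : Fin 15 → Fin 6 × Fin 6 :=
  ![(0, 1), (1, 2), (0, 2), (3, 4), (4, 5), (3, 5),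
    (0, 3), (0, 4), (0, 5), (1, 3), (1, 4), (1, 5), (2, 3), (2, 4), (2, 5)]

/-- The mass function of the random instance: the six triangle edges are deterministic
(indicator forced to `true`), the nine big edges are independently realized with
probability `ε`. -/
noncomputable def mass8 (ε : ℝ) (ω : Fin 15 → Bool) : ℝ :=
  ∏ i : Fin 15,
    if (i : ℕ) < 6 then (if ω i then 1 else 0) else (if ω i then ε else 1 - ε)

/-- Edge weights: triangle edges have weight `1`; each big edge has weight `1/(4ε)` if
realized and `0` otherwise. -/
noncomputable def w8 (ε : ℝ) (ω : Fin 15 → Bool) (i : Fin 15) : ℝ :=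
  if (i : ℕ) < 6 then 1 else if ω i then 1 / (4 * ε) else 0

/-- The value `w(f-OPT(w))` of the optimal fractional matching for weights `wt`. -/
noncomputable def fracOptVal8 (wt : Fin 15 → ℝ) : ℝ :=
  sSup {r : ℝ | ∃ y : Fin 15 → ℝ, (∀ i, 0 ≤ y i) ∧
    (∀ v : Fin 6,
      ∑ i ∈ Finset.univ.filter (fun i => (ends8 i).1 = v ∨ (ends8 i).2 = v), y i ≤ 1) ∧
    r = ∑ i, wt i * y i}

/-- The selected edge set is a matching. -/
def IsMatchingSel8 (A : Finset (Fin 15)) : Prop :=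
  ∀ i ∈ A, ∀ j ∈ A, i ≠ j →
    (ends8 i).1 ≠ (ends8 j).1 ∧ (ends8 i).1 ≠ (ends8 j).2 ∧
    (ends8 i).2 ≠ (ends8 j).1 ∧ (ends8 i).2 ≠ (ends8 j).2

/-- `A` is an online algorithm for the arrival order `ord`: whether the edge arriving at
time `k` is selected depends only on the algorithm's internal randomness and the
realizations of the edges arriving at times `≤ k`. -/
def IsOnline8 (ord : Equiv.Perm (Fin 15)) {Θ : Type}
    (A : Θ → (Fin 15 → Bool) → Finset (Fin 15)) : Prop :=
  ∀ (θ : Θ) (ω ω' : Fin 15 → Bool) (k : Fin 15),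
    (∀ l : Fin 15, l ≤ k → ω (ord l) = ω' (ord l)) →
    (ord k ∈ A θ ω ↔ ord k ∈ A θ ω')

/-- Expected total matched weight of the (randomized) algorithm `A` with internal
randomness distributed according to `ν`. -/
noncomputable def algVal8 (ε : ℝ) {Θ : Type} [Fintype Θ] (ν : Θ → ℝ)
    (A : Θ → (Fin 15 → Bool) → Finset (Fin 15)) : ℝ :=
  expOf (fun q : (Fin 15 → Bool) × Θ => mass8 ε q.1 * ν q.2)
    (fun q => ∑ i ∈ A q.2 q.1, w8 ε q.1 i)


section Aux

lemma sum_prod_bool : ∀ (n : ℕ) (f : Fin n → Bool → ℝ),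
    ∑ ω : Fin n → Bool, ∏ i, f i (ω i) = ∏ i, (f i false + f i true) := by
  intro n
  induction n with
  | zero => intro f; simp
  | succ n ih =>
    intro f
    have h1 : ∑ ω : Fin (n+1) → Bool, ∏ i, f i (ω i)
        = ∑ p : Bool × (Fin n → Bool), ∏ i, f i ((Fin.cons p.1 p.2 : Fin (n+1) → Bool) i) := by
      rw [← Equiv.sum_comp (Fin.consEquiv (fun _ : Fin (n+1) => Bool))
        (fun ω => ∏ i, f i (ω i))]
      apply Finset.sum_congr rfl
      intro p _
      simp [Fin.consEquiv]
    rw [h1, Fintype.sum_prod_type]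
    have h2 : ∀ (b : Bool) (g : Fin n → Bool),
        ∏ i, f i ((Fin.cons b g : Fin (n+1) → Bool) i) = f 0 b * ∏ i : Fin n, f i.succ (g i) := by
      intro b g
      rw [Fin.prod_univ_succ]
      simp
    simp only [h2]
    have h3 : ∀ b, ∑ g : Fin n → Bool, f 0 b * ∏ i : Fin n, f i.succ (g i)
        = f 0 b * ∏ i : Fin n, (f i.succ false + f i.succ true) := by
      intro b
      rw [← Finset.mul_sum, ih (fun i b => f i.succ b)]
    simp only [h3]
    rw [← Finset.sum_mul, Fintype.sum_bool, Fin.prod_univ_succ]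
    ring

lemma mass8_nonneg {ε : ℝ} (h0 : 0 ≤ ε) (h1 : ε ≤ 1) (ω : Fin 15 → Bool) :
    0 ≤ mass8 ε ω := by
  apply Finset.prod_nonneg
  intro i _
  by_cases hi : (i : ℕ) < 6 <;> cases hω : ω i <;> simp [hi, hω] <;> linarith

lemma mass8_sum (ε : ℝ) : ∑ ω : Fin 15 → Bool, mass8 ε ω = 1 := by
  have := sum_prod_bool 15 (fun i b =>
    if (i : ℕ) < 6 then (if b then 1 else 0) else (if b then ε else 1 - ε))
  simp only [mass8]
  rw [this]
  apply Finset.prod_eq_one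
  intro i _
  by_cases hi : (i : ℕ) < 6 <;> simp [hi] <;> ring

lemma mass8_true_of_ne_zero {ε : ℝ} {ω : Fin 15 → Bool} (h : mass8 ε ω ≠ 0)
    {i : Fin 15} (hi : (i : ℕ) < 6) : ω i = true := by
  by_contra hω
  apply h
  apply Finset.prod_eq_zero (Finset.mem_univ i)
  simp [hi, hω]

lemma mass8_nobig (ε : ℝ) :
    ∑ ω : Fin 15 → Bool, mass8 ε ω *
      (if (∀ i : Fin 15, 6 ≤ (i : ℕ) → ω i = false) then 1 else 0) = (1 - ε) ^ 9 := by
  have key : ∀ ω : Fin 15 → Bool, mass8 ε ω *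
      (if (∀ i : Fin 15, 6 ≤ (i : ℕ) → ω i = false) then 1 else 0)
      = ∏ i : Fin 15, ((if (i : ℕ) < 6 then (if ω i then 1 else 0)
          else (if ω i then ε else 1 - ε)) * (if 6 ≤ (i : ℕ) ∧ ω i = true then 0 else 1)) := by
    intro ω
    rw [Finset.prod_mul_distrib]
    congr 1
    by_cases h : ∀ i : Fin 15, 6 ≤ (i : ℕ) → ω i = false
    · rw [if_pos h]
      exact (Finset.prod_eq_one (fun i _ => by simpa using h i)).symm
    · rw [if_neg h]
      push_neg at h
      obtain ⟨i, hi6, hωi⟩ := h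
      refine (Finset.prod_eq_zero (Finset.mem_univ i) ?_).symm
      simp [hi6, hωi]
  simp only [key]
  rw [sum_prod_bool 15 (fun i b =>
    (if (i : ℕ) < 6 then (if b then 1 else 0) else (if b then ε else 1 - ε)) *
      (if 6 ≤ (i : ℕ) ∧ b = true then 0 else 1))]
  have : ∀ i : Fin 15, ((if (i:ℕ) < 6 then (if false = true then (1:ℝ) else 0) else (if false = true then ε else 1 - ε)) *
      (if 6 ≤ (i:ℕ) ∧ false = true then 0 else 1)) +
      ((if (i:ℕ) < 6 then (if true = true then 1 else 0) else (if true = true then ε else 1 - ε)) *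
      (if 6 ≤ (i:ℕ) ∧ true = true then 0 else 1)) = if (i:ℕ) < 6 then 1 else (1 - ε) := by
    intro i
    by_cases hi : (i : ℕ) < 6 <;> simp [hi, Nat.not_lt.mp, le_of_not_gt]
  rw [Finset.prod_congr rfl (fun i _ => this i), Finset.prod_ite, Finset.prod_const,
    Finset.prod_const, one_pow, one_mul]
  have hc : (Finset.filter (fun i : Fin 15 => ¬ (i:ℕ) < 6) Finset.univ).card = 9 := by decide
  rw [hc]

lemma mass8_big (ε : ℝ) (j : Fin 15) (hj : 6 ≤ (j : ℕ)) :
    ∑ ω : Fin 15 → Bool, mass8 ε ω * (if ω j then 1 else 0) = ε := by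
  have key : ∀ ω : Fin 15 → Bool, mass8 ε ω * (if ω j then 1 else 0)
      = ∏ i : Fin 15, ((if (i : ℕ) < 6 then (if ω i then 1 else 0)
          else (if ω i then ε else 1 - ε)) * (if i = j then (if ω i then 1 else 0) else 1)) := by
    intro ω
    rw [Finset.prod_mul_distrib]
    congr 1
    rw [Finset.prod_ite_eq' Finset.univ j (fun i => if ω i then (1:ℝ) else 0)]
    simp
  simp only [key]
  rw [sum_prod_bool 15 (fun i b =>
    (if (i : ℕ) < 6 then (if b then 1 else 0) else (if b then ε else 1 - ε)) *
      (if i = j then (if b then 1 else 0) else 1))]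
  have h2 : ∀ i : Fin 15, ((if (i:ℕ) < 6 then (if (false:Bool) then (1:ℝ) else 0) else (if (false:Bool) then ε else 1 - ε)) *
      (if i = j then (if (false:Bool) then 1 else 0) else 1)) +
      ((if (i:ℕ) < 6 then (if (true:Bool) then 1 else 0) else (if (true:Bool) then ε else 1 - ε)) *
      (if i = j then (if (true:Bool) then 1 else 0) else 1)) = if i = j then ε else 1 := by
    intro i
    by_cases hij : i = j
    · subst hij; simp [Nat.not_lt.mpr hj]
    · by_cases hi : (i : ℕ) < 6 <;> simp [hij, hi] <;> ring
  rw [Finset.prod_congr rfl (fun i _ => h2 i), Finset.prod_ite_eq' Finset.univ j (fun _ => ε)]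
  simp

def availSet (T : Finset (Fin 15)) : Finset (Fin 15) :=
  Finset.univ.filter (fun i => 6 ≤ (i : ℕ) ∧ ∀ j ∈ T,
    (ends8 i).1 ≠ (ends8 j).1 ∧ (ends8 i).1 ≠ (ends8 j).2 ∧
    (ends8 i).2 ≠ (ends8 j).1 ∧ (ends8 i).2 ≠ (ends8 j).2)

instance : DecidablePred IsMatchingSel8 := fun A => by
  unfold IsMatchingSel8; infer_instance

lemma comb6 : ∀ s : Finset (Fin 6),
    IsMatchingSel8 (s.map (Fin.castLEEmb (by norm_num))) →
    4 * s.card + (availSet (s.map (Fin.castLEEmb (by norm_num)))).card ≤ 9 := by decide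

lemma comb (T : Finset (Fin 15)) (hT6 : ∀ i ∈ T, (i : ℕ) < 6)
    (hTM : IsMatchingSel8 T) : 4 * T.card + (availSet T).card ≤ 9 := by
  have h6 : (6 : ℕ) ≤ 15 := by norm_num
  set s : Finset (Fin 6) := Finset.univ.filter (fun j => Fin.castLE h6 j ∈ T) with hs
  have hmap : s.map (Fin.castLEEmb h6) = T := by
    ext i
    simp only [Finset.mem_map, Fin.castLEEmb, Finset.mem_filter, Finset.mem_univ, true_and,
      Function.Embedding.coeFn_mk, hs]
    constructor
    · rintro ⟨j, hj, rfl⟩; exact hj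
    · intro hi
      exact ⟨⟨(i : ℕ), hT6 i hi⟩, by simpa [Fin.castLE] using hi, by simp [Fin.castLE]⟩
  rw [← hmap, Finset.card_map]
  exact comb6 s (by rw [hmap]; exact hTM)

lemma w8_nonneg {ε : ℝ} (hε : 0 < ε) (ω : Fin 15 → Bool) (i : Fin 15) : 0 ≤ w8 ε ω i := by
  unfold w8
  split_ifs <;> positivity

lemma fopt_bdd {wt : Fin 15 → ℝ} (hwt : ∀ i, 0 ≤ wt i) :
    BddAbove {r : ℝ | ∃ y : Fin 15 → ℝ, (∀ i, 0 ≤ y i) ∧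
    (∀ v : Fin 6,
      ∑ i ∈ Finset.univ.filter (fun i => (ends8 i).1 = v ∨ (ends8 i).2 = v), y i ≤ 1) ∧
    r = ∑ i, wt i * y i} := by
  refine ⟨∑ i, wt i, ?_⟩
  rintro r ⟨y, hy0, hyc, rfl⟩
  have hy1 : ∀ i, y i ≤ 1 := by
    intro i
    have h := hyc (ends8 i).1
    have h2 : y i ≤ ∑ j ∈ Finset.univ.filter (fun j => (ends8 j).1 = (ends8 i).1 ∨ (ends8 j).2 = (ends8 i).1), y j :=
      Finset.single_le_sum (fun j _ => hy0 j) (by simp)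
    linarith
  have h3 : ∑ i, wt i * y i ≤ ∑ i, wt i * 1 :=
    Finset.sum_le_sum (fun i _ => mul_le_mul_of_nonneg_left (hy1 i) (hwt i))
  simpa using h3

lemma fopt_ge_three {ε : ℝ} (hε : 0 < ε) (ω : Fin 15 → Bool) :
    3 ≤ fracOptVal8 (w8 ε ω) := by
  apply le_csSup (fopt_bdd (w8_nonneg hε ω))
  refine ⟨fun i => if (i : ℕ) < 6 then 1/2 else 0, fun i => by positivity, ?_, ?_⟩
  · intro v
    fin_cases v <;>
      · rw [Finset.sum_filter]
        simp [Fin.sum_univ_succ, ends8]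
        norm_num
  · simp only [w8, Fin.sum_univ_succ]
    norm_num

lemma fopt_ge_big {ε : ℝ} (hε : 0 < ε) (ω : Fin 15 → Bool) (j : Fin 15)
    (hj : 6 ≤ (j : ℕ)) (hωj : ω j = true) :
    1 / (4 * ε) ≤ fracOptVal8 (w8 ε ω) := by
  apply le_csSup (fopt_bdd (w8_nonneg hε ω))
  refine ⟨fun i => if i = j then 1 else 0, fun i => by positivity, ?_, ?_⟩
  · intro v
    rw [Finset.sum_ite_eq' _ j (fun _ => (1:ℝ))]
    split_ifs <;> norm_num
  · have h4 : ∀ i : Fin 15, w8 ε ω i * (if i = j then (1:ℝ) else 0)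
        = if i = j then w8 ε ω j else 0 := by
      intro i
      split_ifs with h
      · subst h; ring
      · ring
    rw [Finset.sum_congr rfl (fun i _ => h4 i), Finset.sum_ite_eq' Finset.univ j]
    simp [w8, Nat.not_lt.mpr hj, hωj]

lemma aux_part2 (ε : ℝ) (hε : 0 < ε) (hε9 : ε ≤ 1 / 9) :
    expOf (mass8 ε) (fun ω => fracOptVal8 (w8 ε ω)) ≥ 21 / 4 - 36 * ε := by
  set Q : ℝ := (1 - ε) ^ 9 with hQ
  have hQ1 : 1 - 9 * ε ≤ Q := by
    have := one_add_mul_le_pow (a := -ε) (by linarith) 9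
    rw [hQ]
    push_cast at this
    nlinarith [this]
  have hQ2 : Q ≤ 1 - 9 * ε + 36 * ε ^ 2 := by
    have hexp : (1:ℝ) - 9*ε + 36*ε^2 - (1-ε)^9
        = ε^3*(84 - 126*ε) + ε^5*(126 - 84*ε) + ε^7*(36 - 9*ε) + ε^9 := by ring
    have g1 : 0 ≤ ε^3*(84 - 126*ε) := mul_nonneg (by positivity) (by nlinarith)
    have g2 : 0 ≤ ε^5*(126 - 84*ε) := mul_nonneg (by positivity) (by nlinarith)
    have g3 : 0 ≤ ε^7*(36 - 9*ε) := mul_nonneg (by positivity) (by nlinarith)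
    have g4 : 0 ≤ ε^9 := by positivity
    rw [hQ]; nlinarith [hexp]
  have hεle1 : ε ≤ 1 := by linarith
  have hglb : ∀ ω : Fin 15 → Bool,
      mass8 ε ω * (if (∀ i : Fin 15, 6 ≤ (i : ℕ) → ω i = false) then (3:ℝ) else 1/(4*ε))
        ≤ mass8 ε ω * fracOptVal8 (w8 ε ω) := by
    intro ω
    apply mul_le_mul_of_nonneg_left _ (mass8_nonneg hε.le hεle1 ω)
    by_cases h : ∀ i : Fin 15, 6 ≤ (i : ℕ) → ω i = false
    · rw [if_pos h]; exact fopt_ge_three hε ω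
    · rw [if_neg h]
      push_neg at h
      obtain ⟨j, hj6, hωj⟩ := h
      exact fopt_ge_big hε ω j hj6 (by simpa using hωj)
  have hsplit : ∀ ω : Fin 15 → Bool,
      mass8 ε ω * (if (∀ i : Fin 15, 6 ≤ (i : ℕ) → ω i = false) then (3:ℝ) else 1/(4*ε))
        = 3 * (mass8 ε ω * (if (∀ i : Fin 15, 6 ≤ (i : ℕ) → ω i = false) then (1:ℝ) else 0))
          + (1/(4*ε)) * (mass8 ε ω
            - mass8 ε ω * (if (∀ i : Fin 15, 6 ≤ (i : ℕ) → ω i = false) then (1:ℝ) else 0)) := by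
    intro ω
    split_ifs <;> ring
  have hsum : ∑ ω : Fin 15 → Bool,
      mass8 ε ω * (if (∀ i : Fin 15, 6 ≤ (i : ℕ) → ω i = false) then (3:ℝ) else 1/(4*ε))
        = 3 * Q + (1/(4*ε)) * (1 - Q) := by
    rw [Finset.sum_congr rfl (fun ω _ => hsplit ω), Finset.sum_add_distrib,
      ← Finset.mul_sum, ← Finset.mul_sum, Finset.sum_sub_distrib,
      mass8_sum, mass8_nobig]
  have hmono : 3 * Q + (1/(4*ε)) * (1 - Q)
      ≤ expOf (mass8 ε) (fun ω => fracOptVal8 (w8 ε ω)) := by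
    rw [← hsum]
    exact Finset.sum_le_sum (fun ω _ => hglb ω)
  have h4ε : (0:ℝ) < 4 * ε := by linarith
  have hεQ : 0 ≤ ε * (Q - (1 - 9*ε)) := mul_nonneg hε.le (by linarith)
  have key : (21/4 - 36*ε) * (4*ε) ≤ 12*ε*Q + (1 - Q) := by nlinarith [hεQ, hQ2]
  have heq : 3 * Q + (1/(4*ε)) * (1 - Q) = (12*ε*Q + (1 - Q)) / (4*ε) := by
    field_simp
    ring
  have hfin : 21/4 - 36*ε ≤ 3 * Q + (1/(4*ε)) * (1 - Q) := by
    rw [heq, ← mul_div_cancel_right₀ (21/4 - 36*ε) (ne_of_gt h4ε)]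
    gcongr
  linarith

lemma aux_part1 (ε : ℝ) (hε : 0 < ε) (hε9 : ε ≤ 1 / 9)
    (ord : Equiv.Perm (Fin 15)) (hord : ∀ k : Fin 15, (k : ℕ) < 6 ↔ ((ord k : ℕ) < 6))
    (Θ : Type) [Fintype Θ] (ν : Θ → ℝ) (hν : ∀ θ, 0 ≤ ν θ) (hν1 : ∑ θ, ν θ = 1)
    (A : Θ → (Fin 15 → Bool) → Finset (Fin 15))
    (hM : ∀ θ ω, IsMatchingSel8 (A θ ω)) (hO : IsOnline8 ord A) :
    algVal8 ε ν A ≤ 9 / 4 := by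
  have hεle1 : ε ≤ 1 := by linarith
  have key : ∀ θ : Θ, ∑ ω : Fin 15 → Bool, mass8 ε ω * (∑ i ∈ A θ ω, w8 ε ω i) ≤ 9/4 := by
    intro θ
    set ωtop : Fin 15 → Bool := fun _ => true with hωtop
    set T : Finset (Fin 15) := (A θ ωtop).filter (fun i : Fin 15 => (i : ℕ) < 6) with hT
    -- step a: triangle decisions don't depend on the big-edge realizations
    have ha : ∀ ω : Fin 15 → Bool, mass8 ε ω ≠ 0 → ∀ i : Fin 15, (i : ℕ) < 6 →
        (i ∈ A θ ω ↔ i ∈ A θ ωtop) := by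
      intro ω hmω i hi6
      have hk6 : ((ord.symm i : Fin 15) : ℕ) < 6 :=
        (hord (ord.symm i)).mpr (by rw [Equiv.apply_symm_apply]; exact hi6)
      have hk := hO θ ω ωtop (ord.symm i) ?_
      · rwa [Equiv.apply_symm_apply] at hk
      · intro l hl
        have hl6 : ((l : Fin 15) : ℕ) < 6 := lt_of_le_of_lt (Fin.le_def.mp hl) hk6
        have hordl6 : ((ord l : Fin 15) : ℕ) < 6 := (hord l).mp hl6
        rw [mass8_true_of_ne_zero hmω hordl6]
    -- T is a matching of triangle edges
    have hT6 : ∀ i ∈ T, (i : ℕ) < 6 := fun i hi => (Finset.mem_filter.mp hi).2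
    have hTM : IsMatchingSel8 T := by
      intro i hi j hj hij
      exact hM θ ωtop i (Finset.mem_filter.mp hi).1 j (Finset.mem_filter.mp hj).1 hij
    -- step b: pointwise bound on the algorithm's value
    have hbound : ∀ ω : Fin 15 → Bool, mass8 ε ω ≠ 0 →
        (∑ i ∈ A θ ω, w8 ε ω i) ≤ (T.card : ℝ)
          + ∑ i ∈ availSet T, (1/(4*ε)) * (if ω i then 1 else 0) := by
      intro ω hmω
      rw [← Finset.sum_filter_add_sum_filter_not (A θ ω) (fun i : Fin 15 => (i : ℕ) < 6)]
      have hTeq : (A θ ω).filter (fun i : Fin 15 => (i : ℕ) < 6) = T := by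
        rw [hT]
        ext i
        simp only [Finset.mem_filter]
        constructor
        · rintro ⟨h1, h2⟩; exact ⟨(ha ω hmω i h2).mp h1, h2⟩
        · rintro ⟨h1, h2⟩; exact ⟨(ha ω hmω i h2).mpr h1, h2⟩
      have hsmall : ∑ i ∈ (A θ ω).filter (fun i : Fin 15 => (i : ℕ) < 6), w8 ε ω i = (T.card : ℝ) := by
        rw [hTeq, Finset.sum_congr rfl (fun i hi => show w8 ε ω i = 1 by
          simp [w8, hT6 i hi]), Finset.sum_const, nsmul_eq_mul, mul_one]
      have hsub : (A θ ω).filter (fun i : Fin 15 => ¬ (i : ℕ) < 6) ⊆ availSet T := by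
        intro i hi
        obtain ⟨hiA, hi6⟩ := Finset.mem_filter.mp hi
        rw [availSet, Finset.mem_filter]
        refine ⟨Finset.mem_univ i, Nat.not_lt.mp hi6, ?_⟩
        intro j hj
        have hj6 : (j : ℕ) < 6 := hT6 j hj
        have hjA : j ∈ A θ ω := (ha ω hmω j hj6).mpr (Finset.mem_filter.mp hj).1
        have hne : i ≠ j := by
          intro h; rw [h] at hi6; exact hi6 hj6
        exact hM θ ω i hiA j hjA hne
      have hbig : ∑ i ∈ (A θ ω).filter (fun i : Fin 15 => ¬ (i : ℕ) < 6), w8 ε ω i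
          ≤ ∑ i ∈ availSet T, (1/(4*ε)) * (if ω i then 1 else 0) := by
        have hw : ∀ i ∈ (A θ ω).filter (fun i : Fin 15 => ¬ (i : ℕ) < 6),
            w8 ε ω i = (1/(4*ε)) * (if ω i then 1 else 0) := by
          intro i hi
          have hi6 := (Finset.mem_filter.mp hi).2
          cases h : ω i <;> simp [w8, hi6, h]
        rw [Finset.sum_congr rfl hw]
        apply Finset.sum_le_sum_of_subset_of_nonneg hsub
        intro i _ _
        have : (0:ℝ) ≤ (if ω i then (1:ℝ) else 0) := by positivity
        positivity
      linarith
    -- expectation bound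
    have hexp : ∑ ω : Fin 15 → Bool, mass8 ε ω * (∑ i ∈ A θ ω, w8 ε ω i)
        ≤ ∑ ω : Fin 15 → Bool, mass8 ε ω * ((T.card : ℝ)
          + ∑ i ∈ availSet T, (1/(4*ε)) * (if ω i then 1 else 0)) := by
      apply Finset.sum_le_sum
      intro ω _
      rcases eq_or_ne (mass8 ε ω) 0 with h | h
      · rw [h, zero_mul, zero_mul]
      · exact mul_le_mul_of_nonneg_left (hbound ω h) (mass8_nonneg hε.le hεle1 ω)
    -- compute the right-hand side
    have hrhs : ∑ ω : Fin 15 → Bool, mass8 ε ω * ((T.card : ℝ)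
          + ∑ i ∈ availSet T, (1/(4*ε)) * (if ω i then 1 else 0))
        = (T.card : ℝ) + ((availSet T).card : ℝ) * (1/4) := by
      have hterm : ∀ ω : Fin 15 → Bool, mass8 ε ω * ((T.card : ℝ)
            + ∑ i ∈ availSet T, (1/(4*ε)) * (if ω i then 1 else 0))
          = (T.card : ℝ) * mass8 ε ω
            + ∑ i ∈ availSet T, (1/(4*ε)) * (mass8 ε ω * (if ω i then 1 else 0)) := by
        intro ω
        rw [mul_add, Finset.mul_sum]
        congr 1
        · ring
        · exact Finset.sum_congr rfl (fun i _ => by ring)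
      rw [Finset.sum_congr rfl (fun ω _ => hterm ω), Finset.sum_add_distrib,
        ← Finset.mul_sum, mass8_sum, mul_one, Finset.sum_comm]
      congr 1
      have : ∀ i ∈ availSet T,
          ∑ ω : Fin 15 → Bool, (1/(4*ε)) * (mass8 ε ω * (if ω i then 1 else 0))
            = (1:ℝ)/4 := by
        intro i hi
        have hi6 : 6 ≤ (i : ℕ) := (Finset.mem_filter.mp hi).2.1
        rw [← Finset.mul_sum, mass8_big ε i hi6]
        field_simp
        try ring
      rw [Finset.sum_congr rfl this, Finset.sum_const, nsmul_eq_mul]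
      try ring
    have hcomb := comb T hT6 hTM
    have hcast : 4 * (T.card : ℝ) + ((availSet T).card : ℝ) ≤ 9 := by
      exact_mod_cast hcomb
    linarith
  -- assemble over θ
  unfold algVal8 expOf
  rw [Fintype.sum_prod_type, Finset.sum_comm]
  have hswap : ∀ θ : Θ, ∑ ω : Fin 15 → Bool,
      (mass8 ε ω * ν θ) * (∑ i ∈ A θ ω, w8 ε ω i)
        = ν θ * ∑ ω : Fin 15 → Bool, mass8 ε ω * (∑ i ∈ A θ ω, w8 ε ω i) := by
    intro θ
    rw [Finset.mul_sum]
    exact Finset.sum_congr rfl (fun ω _ => by ring)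
  calc ∑ θ : Θ, ∑ ω : Fin 15 → Bool, (mass8 ε ω * ν θ) * (∑ i ∈ A θ ω, w8 ε ω i)
      = ∑ θ : Θ, ν θ * ∑ ω : Fin 15 → Bool, mass8 ε ω * (∑ i ∈ A θ ω, w8 ε ω i) :=
        Finset.sum_congr rfl (fun θ _ => hswap θ)
    _ ≤ ∑ θ : Θ, ν θ * (9/4) :=
        Finset.sum_le_sum (fun θ _ => mul_le_mul_of_nonneg_left (key θ) (hν θ))
    _ = 9/4 := by rw [← Finset.sum_mul, hν1, one_mul]

end Aux

/-- Upper bound of `3/7` against the fractional optimum for matching prophet inequality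
with edge arrival (Proposition 6.1 in the paper): on the 6-vertex instance above, with
the six triangle edges arriving (in any order) before the nine big edges,
(i) every online matching algorithm has expected matched weight at most `9/4`;
(ii) the expected optimal fractional matching value is at least `21/4 - 36ε`;
(iii) hence for every `δ > 0` there is `ε > 0` such that no online algorithm gets more
than `(3/7 + δ)` times the expected optimal fractional matching value. -/
theorem upper_bound_three_sevenths_fractional :
    (∀ ε : ℝ, 0 < ε → ε ≤ 1 / 9 →
      ∀ ord : Equiv.Perm (Fin 15), (∀ k : Fin 15, (k : ℕ) < 6 ↔ ((ord k : ℕ) < 6)) →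
      ∀ (Θ : Type) [Fintype Θ], ∀ ν : Θ → ℝ, (∀ θ, 0 ≤ ν θ) → (∑ θ, ν θ = 1) →
      ∀ A : Θ → (Fin 15 → Bool) → Finset (Fin 15),
        (∀ θ ω, IsMatchingSel8 (A θ ω)) → IsOnline8 ord A →
        algVal8 ε ν A ≤ 9 / 4) ∧
    (∀ ε : ℝ, 0 < ε → ε ≤ 1 / 9 →
      expOf (mass8 ε) (fun ω => fracOptVal8 (w8 ε ω)) ≥ 21 / 4 - 36 * ε) ∧
    (∀ δ : ℝ, 0 < δ → ∃ ε : ℝ, 0 < ε ∧ ε ≤ 1 / 9 ∧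
      ∀ ord : Equiv.Perm (Fin 15), (∀ k : Fin 15, (k : ℕ) < 6 ↔ ((ord k : ℕ) < 6)) →
      ∀ (Θ : Type) [Fintype Θ], ∀ ν : Θ → ℝ, (∀ θ, 0 ≤ ν θ) → (∑ θ, ν θ = 1) →
      ∀ A : Θ → (Fin 15 → Bool) → Finset (Fin 15),
        (∀ θ ω, IsMatchingSel8 (A θ ω)) → IsOnline8 ord A →
        algVal8 ε ν A ≤ (3 / 7 + δ) * expOf (mass8 ε) (fun ω => fracOptVal8 (w8 ε ω))) := by
  refine ⟨fun ε hε hε9 ord hord Θ _ ν hν hν1 A hM hO =>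
      aux_part1 ε hε hε9 ord hord Θ ν hν hν1 A hM hO,
    fun ε hε hε9 => aux_part2 ε hε hε9, ?_⟩
  intro δ hδ
  have h1δ : (0:ℝ) < 1 + δ := by linarith
  refine ⟨min (1/9) (δ/(48*(1+δ))), lt_min (by norm_num) (by positivity),
    min_le_left _ _, ?_⟩
  intro ord hord Θ _ ν hν hν1 A hM hO
  set ε : ℝ := min (1/9) (δ/(48*(1+δ))) with hεdef
  have hε : 0 < ε := lt_min (by norm_num) (by positivity)
  have hε9 : ε ≤ 1/9 := min_le_left _ _
  have h1 := aux_part1 ε hε hε9 ord hord Θ ν hν hν1 A hM hO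
  have h2 := aux_part2 ε hε hε9
  have hεb : ε * (48*(1+δ)) ≤ δ := by
    rw [← le_div_iff₀ (by positivity)]
    exact min_le_right _ _
  have hstep : (9:ℝ)/4 ≤ (3/7 + δ) * (21/4 - 36*ε) := by
    nlinarith [hεb, mul_nonneg hε.le hδ.le, hε.le, hδ.le]
  have h37 : (0:ℝ) ≤ 3/7 + δ := by linarith
  calc algVal8 ε ν A ≤ 9/4 := h1
    _ ≤ (3/7 + δ) * (21/4 - 36*ε) := hstep
    _ ≤ (3/7 + δ) * expOf (mass8 ε) (fun ω => fracOptVal8 (w8 ε ω)) :=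
        mul_le_mul_of_nonneg_left h2 h37
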